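/- For every n ≥ 1, the sum of binomial coefficients C(n, i) for i from 0 to ⌊3n/10⌋ is at most 2^{0.882·n}. -/

import Mathlib

open Finset

set_option maxRecDepth 100000 in
lemma base_ineq : (7/3:ℝ) ^ ((0.3:ℝ)) * (10/7) ≤ (2:ℝ) ^ ((0.882:ℝ)) := by
  have h73 : (0:ℝ) ≤ 7/3 := by norm_num
  rw [← pow_le_pow_iff_left₀ (n := 500) (by positivity) (by positivity) (by norm_num)]
  rw [mul_pow, ← Real.rpow_natCast ((7/3:ℝ) ^ ((0.3:ℝ))) 500, ← Real.rpow_mul h73,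
      ← Real.rpow_natCast ((2:ℝ) ^ ((0.882:ℝ))) 500, ← Real.rpow_mul (by norm_num)]
  have e1 : (0.3:ℝ) * (500:ℕ) = ((150:ℕ):ℝ) := by norm_num
  have e2 : (0.882:ℝ) * (500:ℕ) = ((441:ℕ):ℝ) := by norm_num
  rw [e1, e2, Real.rpow_natCast, Real.rpow_natCast]
  rw [div_pow, div_pow, div_mul_div_comm, div_le_iff₀ (by positivity)]
  norm_num
  norm_cast

theorem sum_binomials_three_tenths (n : ℕ) (hn : 1 ≤ n) :
    (∑ i ∈ Finset.range (3 * n / 10 + 1), (n.choose i : ℝ)) ≤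
      (2 : ℝ) ^ ((0.882 : ℝ) * (n : ℝ)) := by
  set k := 3 * n / 10 with hk
  -- Step 1: termwise bound
  have h1 : (∑ i ∈ Finset.range (k + 1), (n.choose i : ℝ)) ≤
      ∑ i ∈ Finset.range (k + 1), (7/3:ℝ)^k * ((3/7:ℝ)^i * (n.choose i : ℝ)) := by
    refine Finset.sum_le_sum fun i hi => ?_
    have hik : i ≤ k := Nat.lt_succ_iff.mp (Finset.mem_range.mp hi)
    have h37 : ((3:ℝ)/7)^k ≤ (3/7:ℝ)^i :=
      pow_le_pow_of_le_one (by norm_num) (by norm_num) hik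
    have : (1:ℝ) ≤ (7/3:ℝ)^k * (3/7:ℝ)^i := by
      calc (1:ℝ) = (7/3:ℝ)^k * (3/7:ℝ)^k := by
            rw [← mul_pow]; norm_num
        _ ≤ (7/3:ℝ)^k * (3/7:ℝ)^i := by
            exact mul_le_mul_of_nonneg_left h37 (by positivity)
    calc (n.choose i : ℝ) = 1 * (n.choose i : ℝ) := by ring
      _ ≤ ((7/3:ℝ)^k * (3/7:ℝ)^i) * (n.choose i : ℝ) := by
          exact mul_le_mul_of_nonneg_right this (by positivity)
      _ = (7/3:ℝ)^k * ((3/7:ℝ)^i * (n.choose i : ℝ)) := by ring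
  -- Step 2: extend sum and binomial theorem
  have hkn : k + 1 ≤ n + 1 := by
    have : 3 * n / 10 ≤ n := Nat.div_le_of_le_mul (by omega)
    omega
  have h2 : (∑ i ∈ Finset.range (k + 1), (3/7:ℝ)^i * (n.choose i : ℝ)) ≤
      ∑ i ∈ Finset.range (n + 1), (3/7:ℝ)^i * (n.choose i : ℝ) := by
    apply Finset.sum_le_sum_of_subset_of_nonneg (Finset.range_subset_range.mpr hkn)
    intro i _ _; positivity
  have h3 : (∑ i ∈ Finset.range (n + 1), (3/7:ℝ)^i * (n.choose i : ℝ)) = (10/7:ℝ)^n := by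
    have := add_pow (3/7:ℝ) 1 n
    simp only [one_pow, mul_one] at this
    rw [show ((3:ℝ)/7 + 1) = 10/7 by norm_num] at this
    rw [← this]
  -- Step 3: final rpow bound
  have hS : (∑ i ∈ Finset.range (k + 1), (n.choose i : ℝ)) ≤ (7/3:ℝ)^k * (10/7:ℝ)^n := by
    calc (∑ i ∈ Finset.range (k + 1), (n.choose i : ℝ)) ≤ _ := h1
      _ = (7/3:ℝ)^k * ∑ i ∈ Finset.range (k + 1), (3/7:ℝ)^i * (n.choose i : ℝ) := by
          rw [Finset.mul_sum]
      _ ≤ (7/3:ℝ)^k * (10/7:ℝ)^n := by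
          rw [← h3]; exact mul_le_mul_of_nonneg_left h2 (by positivity)
  refine hS.trans ?_
  have hkr : ((k:ℝ)) ≤ (0.3:ℝ) * n := by
    have := Nat.cast_div_le (α := ℝ) (m := 3 * n) (n := 10)
    push_cast at this ⊢
    nlinarith
  have hb1 : (7/3:ℝ)^k ≤ (7/3:ℝ) ^ ((0.3:ℝ) * n) := by
    rw [← Real.rpow_natCast (7/3:ℝ) k]
    exact Real.rpow_le_rpow_of_exponent_le (by norm_num) hkr
  have hfin : (7/3:ℝ) ^ ((0.3:ℝ) * n) * (10/7:ℝ)^n ≤ (2:ℝ) ^ ((0.882:ℝ) * n) := by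
    have e1 : (7/3:ℝ) ^ ((0.3:ℝ) * n) = ((7/3:ℝ) ^ ((0.3:ℝ)))^n := by
      rw [Real.rpow_mul (by norm_num), Real.rpow_natCast]
    have e2 : (2:ℝ) ^ ((0.882:ℝ) * n) = ((2:ℝ) ^ ((0.882:ℝ)))^n := by
      rw [Real.rpow_mul (by norm_num), Real.rpow_natCast]
    rw [e1, e2, ← mul_pow]
    exact pow_le_pow_left₀ (by positivity) base_ineq n
  calc (7/3:ℝ)^k * (10/7:ℝ)^n ≤ (7/3:ℝ) ^ ((0.3:ℝ) * n) * (10/7:ℝ)^n :=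
        mul_le_mul_of_nonneg_right hb1 (by positivity)
    _ ≤ (2:ℝ) ^ ((0.882:ℝ) * n) := hfin
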